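/- (Limit of Random-Feature Weak-to-Strong Generalization, spectral form.) Let H be a real Hilbert space with a Hilbert basis (e_k)_{k∈ℕ}, let λ : ℕ → ℝ satisfy λ_k ≥ 0, and let T ≥ 0. Let f* ∈ H with ‖f*‖² = 1, let f_teacher ∈ H be shrink-optimal with respect to f*, and let f_student ∈ H satisfy ⟪f_student, e_k⟫ = (1 − exp(−λ_k · T)) · ⟪f_teacher, e_k⟫ for every k. Set L_TE := ‖f_teacher − f*‖² and L_ST := ‖f_student − f*‖². Then L_ST ≥ (√(1 + 3·L_TE) − √(1 − L_TE))² / 4 ≥ (3/4)·L_TE². -/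

import Mathlib

open scoped RealInnerProductSpace

/-- `f` is shrink-optimal with respect to `g`: no shrinkage `α • f`, `0 ≤ α ≤ 1`,
gets closer to `g` than `f` itself. -/
def ShrinkOptimal {H : Type*} [NormedAddCommGroup H] [InnerProductSpace ℝ H]
    (f g : H) : Prop :=
  ∀ α : ℝ, 0 ≤ α → α ≤ 1 → ‖f - g‖ ^ 2 ≤ ‖α • f - g‖ ^ 2

/-- Limit of random-feature weak-to-strong generalization (spectral form): for a
shrink-optimal teacher and a gradient-flow student (eigencoefficients of the teacher
shrunk by `1 − e^{−λ_k T}`), the student loss is at least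
`(√(1 + 3 L_TE) − √(1 − L_TE))² / 4 ≥ (3/4) L_TE²`. -/
theorem weakToStrong_randomFeature_limit {H : Type*} [NormedAddCommGroup H]
    [InnerProductSpace ℝ H] [CompleteSpace H]
    (e : HilbertBasis ℕ ℝ H) (lam : ℕ → ℝ) (hlam : ∀ k, 0 ≤ lam k)
    (T : ℝ) (hT : 0 ≤ T)
    (fstar fteacher fstudent : H) (hstar : ‖fstar‖ ^ 2 = 1)
    (hteacher : ShrinkOptimal fteacher fstar)
    (hstudent : ∀ k : ℕ,
      ⟪fstudent, e k⟫ = (1 - Real.exp (-(lam k * T))) * ⟪fteacher, e k⟫) :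
    (Real.sqrt (1 + 3 * ‖fteacher - fstar‖ ^ 2) -
        Real.sqrt (1 - ‖fteacher - fstar‖ ^ 2)) ^ 2 / 4 ≤ ‖fstudent - fstar‖ ^ 2 ∧
    (3 / 4) * (‖fteacher - fstar‖ ^ 2) ^ 2 ≤
      (Real.sqrt (1 + 3 * ‖fteacher - fstar‖ ^ 2) -
        Real.sqrt (1 - ‖fteacher - fstar‖ ^ 2)) ^ 2 / 4 := by
  set t : ℝ := ‖fteacher‖ with ht
  set p : ℝ := ⟪fteacher, fstar⟫ with hp
  set L : ℝ := ‖fteacher - fstar‖ ^ 2 with hL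
  have hL0 : 0 ≤ L := by rw [hL]; positivity
  have hLval : L = t ^ 2 - 2 * p + 1 := by
    rw [hL, norm_sub_sq_real, hstar, ht, hp]
  -- Step 1: shrink optimality gives t² ≤ p
  have hpt : t ^ 2 ≤ p := by
    have key : ∀ α : ℝ, 0 ≤ α → α ≤ 1 →
        t ^ 2 - 2 * p ≤ α ^ 2 * t ^ 2 - 2 * (α * p) := by
      intro α h0 h1
      have h2 := hteacher α h0 h1
      have e1 : ‖fteacher - fstar‖ ^ 2 = t ^ 2 - 2 * p + 1 := by
        rw [norm_sub_sq_real, hstar, ht, hp]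
      have e2 : ‖α • fteacher - fstar‖ ^ 2 = α ^ 2 * t ^ 2 - 2 * (α * p) + 1 := by
        rw [norm_sub_sq_real, norm_smul, real_inner_smul_left, hstar,
          Real.norm_eq_abs, mul_pow, sq_abs, ht, hp]
      rw [e1, e2] at h2
      linarith
    by_contra hcon
    push_neg at hcon
    have h0 := key 0 le_rfl zero_le_one
    have hp0 : 0 < p := by nlinarith
    have ht2 : 0 < t ^ 2 := lt_trans hp0 hcon
    set α : ℝ := (p + t ^ 2) / (2 * t ^ 2) with hα
    have hα0 : 0 ≤ α := by positivity
    have hα1 : α ≤ 1 := by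
      rw [hα, div_le_one (by positivity)]; linarith
    have hk := key α hα0 hα1
    have hαe : α * (2 * t ^ 2) = p + t ^ 2 := by
      rw [hα]; exact div_mul_cancel₀ _ (mul_pos two_pos ht2).ne'
    have h4 := mul_le_mul_of_nonneg_right hk (by positivity : (0:ℝ) ≤ 4 * t ^ 2)
    have hr : (α ^ 2 * t ^ 2 - 2 * (α * p)) * (4 * t ^ 2)
        = (p + t ^ 2) ^ 2 - 4 * p * (p + t ^ 2) := by
      rw [← hαe]; ring
    rw [hr] at h4
    nlinarith [sq_nonneg (t ^ 2 - p), mul_pos (sub_pos.mpr hcon) (sub_pos.mpr hcon)]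
  have ht1L : t ^ 2 ≤ 1 - L := by linarith [hLval, hpt]
  have hL1 : L ≤ 1 := by nlinarith [sq_nonneg t]
  -- Step 2: ‖2 • fstudent - fteacher‖ ≤ t  (Parseval, shrink factors in [0,1])
  have hv : ‖(2:ℝ) • fstudent - fteacher‖ ≤ t := by
    set v : H := (2:ℝ) • fstudent - fteacher with hvdef
    have hsum1 := e.hasSum_inner_mul_inner v v
    have hsum2 := e.hasSum_inner_mul_inner fteacher fteacher
    have hle : ⟪v, v⟫ ≤ ⟪fteacher, fteacher⟫ := by
      refine hasSum_le (fun k => ?_) hsum1 hsum2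
      have hvk : ⟪v, e k⟫ = (1 - 2 * Real.exp (-(lam k * T))) * ⟪fteacher, e k⟫ := by
        rw [hvdef, inner_sub_left, real_inner_smul_left, hstudent k]; ring
      have hvk' : ⟪e k, v⟫ = (1 - 2 * Real.exp (-(lam k * T))) * ⟪fteacher, e k⟫ := by
        rw [real_inner_comm]; exact hvk
      have hvk'' : ⟪e k, fteacher⟫ = ⟪fteacher, e k⟫ := real_inner_comm _ _
      rw [hvk, hvk', hvk'']
      have hE0 : 0 < Real.exp (-(lam k * T)) := Real.exp_pos _
      have hE1 : Real.exp (-(lam k * T)) ≤ 1 :=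
        Real.exp_le_one_iff.mpr (neg_nonpos.mpr (mul_nonneg (hlam k) hT))
      nlinarith [mul_nonneg (sq_nonneg ⟪fteacher, e k⟫)
        (mul_nonneg hE0.le (sub_nonneg.mpr hE1))]
    rw [real_inner_self_eq_norm_sq, real_inner_self_eq_norm_sq] at hle
    rw [ht]
    nlinarith [norm_nonneg v, norm_nonneg fteacher]
  have hmid : ‖fstudent - (1/2:ℝ) • fteacher‖ ≤ t / 2 := by
    have hid : fstudent - (1/2:ℝ) • fteacher
        = (1/2:ℝ) • ((2:ℝ) • fstudent - fteacher) := by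
      rw [smul_sub, smul_smul]; norm_num
    rw [hid, norm_smul, Real.norm_eq_abs,
      abs_of_nonneg (by norm_num : (0:ℝ) ≤ (1/2:ℝ))]
    linarith
  -- Step 3: ‖fstar - (1/2) • fteacher‖² = (2 + 2L - t²)/4
  have hga : ‖fstar - (1/2:ℝ) • fteacher‖ ^ 2 = (2 + 2 * L - t ^ 2) / 4 := by
    have h1 : ‖fstar - (1/2:ℝ) • fteacher‖ ^ 2 = 1 - p + t ^ 2 / 4 := by
      rw [norm_sub_sq_real, hstar, real_inner_smul_right, norm_smul,
        Real.norm_eq_abs, mul_pow, sq_abs, real_inner_comm, ht, hp]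
      ring
    rw [h1]; linarith [hLval]
  -- Step 4: triangle inequality
  have htri : ‖fstar - (1/2:ℝ) • fteacher‖ - t / 2 ≤ ‖fstudent - fstar‖ := by
    have h2 : ‖fstar - (1/2:ℝ) • fteacher‖
        ≤ ‖fstar - fstudent‖ + ‖fstudent - (1/2:ℝ) • fteacher‖ := by
      have h3 := dist_triangle fstar fstudent ((1/2:ℝ) • fteacher)
      simpa [dist_eq_norm] using h3
    rw [norm_sub_rev fstar fstudent] at h2
    linarith
  -- Step 5: numeric chain
  have h2Lt : (0:ℝ) ≤ 2 + 2 * L - t ^ 2 := by linarith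
  have hganorm : ‖fstar - (1/2:ℝ) • fteacher‖ = Real.sqrt (2 + 2 * L - t ^ 2) / 2 := by
    rw [← Real.sqrt_sq (norm_nonneg (fstar - (1/2:ℝ) • fteacher)), hga,
      show (2 + 2 * L - t ^ 2) / 4 = (Real.sqrt (2 + 2 * L - t ^ 2) / 2) ^ 2 by
        rw [div_pow, Real.sq_sqrt h2Lt]; norm_num,
      Real.sqrt_sq (by positivity)]
  have hB : Real.sqrt (1 + 3 * L) - Real.sqrt (1 - L) ≤ 2 * ‖fstudent - fstar‖ := by
    have hs1 : Real.sqrt (1 + 3 * L) ≤ Real.sqrt (2 + 2 * L - t ^ 2) :=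
      Real.sqrt_le_sqrt (by linarith)
    have hs2 : t ≤ Real.sqrt (1 - L) := by
      rw [show t = Real.sqrt (t ^ 2) from (Real.sqrt_sq (by rw [ht]; positivity)).symm]
      exact Real.sqrt_le_sqrt ht1L
    rw [hganorm] at htri
    linarith
  constructor
  · have hBnn : 0 ≤ Real.sqrt (1 + 3 * L) - Real.sqrt (1 - L) := by
      have h5 := Real.sqrt_le_sqrt (show (1:ℝ) - L ≤ 1 + 3 * L by linarith)
      linarith
    nlinarith [mul_nonneg hBnn (sub_nonneg.mpr hB),
      sq_nonneg (2 * ‖fstudent - fstar‖ - (Real.sqrt (1 + 3 * L) - Real.sqrt (1 - L)))]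
  · set s1 : ℝ := Real.sqrt (1 + 3 * L) with hs1d
    set s2 : ℝ := Real.sqrt (1 - L) with hs2d
    have h1 : s1 ^ 2 = 1 + 3 * L := Real.sq_sqrt (by linarith)
    have h2 : s2 ^ 2 = 1 - L := Real.sq_sqrt (by linarith)
    have hprod : (s1 * s2) ^ 2 = 1 + 2 * L - 3 * L ^ 2 := by
      rw [mul_pow, h1, h2]; ring
    have hexpand : (s1 - s2) ^ 2 = 2 + 2 * L - 2 * (s1 * s2) := by
      have : (s1 - s2) ^ 2 = s1 ^ 2 + s2 ^ 2 - 2 * (s1 * s2) := by ring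
      rw [this, h1, h2]; ring
    have hsq : 0 ≤ (s1 * s2) ^ 2 - 2 * (s1 * s2) + 1 := by
      have h9 := sq_nonneg (s1 * s2 - 1)
      linarith [sq_abs (s1 * s2 - 1), (by ring : (s1 * s2 - 1) ^ 2 = (s1 * s2) ^ 2 - 2 * (s1 * s2) + 1) ▸ h9]
    linarith [hsq, hprod, hexpand]
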